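/- arXiv:2302.13880 — 4 statements merged into one kernel-verified Lean document; each statement's English description precedes it below -/
import Mathlib

section
/- Let V be a finite type of vertices. Let O be a finite family of pairwise disjoint nonempty finite subsets of V (the cycles of an optimal solution), let C be a finite family of finite subsets of V each of cardinality at most 3 (the cycles chosen by the greedy algorithm), and let ω be a nonnegative real-valued weight function on finite subsets of V. Suppose there is a map f : O → C such that for every o ∈ O, the set f(o) intersects o and ω(o) ≤ ω(f(o)) (this encodes that when the greedy algorithm could no longer pick o, some already-chosen cycle of at least o's weight overlapped o). Then ∑_{o ∈ O} ω(o) ≤ 3 · ∑_{c ∈ C} ω(c). In other words, the greedy algorithm for the kidney exchange problem with maximum cycle size 3 is a 1/3-approximation. -/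
/-- The greedy algorithm for the kidney exchange problem with maximum cycle
size 3 is a 1/3-approximation: if every optimal cycle `o` is mapped to a
greedily chosen cycle `f o` that intersects `o` and has at least `o`'s weight,
then the total optimal weight is at most three times the greedy weight. -/
theorem greedy_third_approx {V : Type*} [Fintype V] [DecidableEq V]
    (O C : Finset (Finset V))
    (hO_disj : (O : Set (Finset V)).Pairwise (Function.onFun Disjoint id))
    (hO_ne : ∀ o ∈ O, o.Nonempty)
    (hC_card : ∀ c ∈ C, c.card ≤ 3)
    (ω : Finset V → ℝ) (hω : ∀ s : Finset V, 0 ≤ ω s)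
    (f : Finset V → Finset V)
    (hf_mem : ∀ o ∈ O, f o ∈ C)
    (hf_inter : ∀ o ∈ O, (f o ∩ o).Nonempty)
    (hf_wt : ∀ o ∈ O, ω o ≤ ω (f o)) :
    ∑ o ∈ O, ω o ≤ 3 * ∑ c ∈ C, ω c := by
  classical
  -- Each greedy cycle `c` has at most 3 vertices, and distinct optimal cycles
  -- mapped to `c` use distinct vertices of `c`, so each fiber has ≤ 3 elements.
  have key : ∀ c ∈ C, (O.filter (fun o => f o = c)).card ≤ 3 := by
    intro c hc
    rcases (O.filter (fun o => f o = c)).eq_empty_or_nonempty with h | h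
    · simp [h]
    obtain ⟨o0, ho0⟩ := h
    have ho0O := (Finset.mem_filter.mp ho0).1
    have hV : Nonempty V := ⟨(hf_inter o0 ho0O).choose⟩
    set g : Finset V → V := fun o =>
      if h : (f o ∩ o).Nonempty then h.choose else Classical.choice hV with hg
    have hmem : ∀ o ∈ O, g o ∈ f o ∩ o := by
      intro o ho
      simp only [hg, dif_pos (hf_inter o ho)]
      exact (hf_inter o ho).choose_spec
    have hle : (O.filter (fun o => f o = c)).card ≤ c.card := by
      apply Finset.card_le_card_of_injOn g
      · intro o ho
        obtain ⟨hoO, hfo⟩ := Finset.mem_filter.mp ho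
        have := hmem o hoO
        rw [hfo] at this
        exact (Finset.mem_inter.mp this).1
      · intro o1 h1 o2 h2 heq
        have h1O := (Finset.mem_filter.mp h1).1
        have h2O := (Finset.mem_filter.mp h2).1
        by_contra hne
        have hd := hO_disj h1O h2O hne
        have hm1 : g o1 ∈ o1 := (Finset.mem_inter.mp (hmem o1 h1O)).2
        have hm2 : g o1 ∈ o2 := heq ▸ (Finset.mem_inter.mp (hmem o2 h2O)).2
        exact (Finset.disjoint_left.mp hd hm1) hm2
    exact hle.trans (hC_card c hc)
  calc ∑ o ∈ O, ω o ≤ ∑ o ∈ O, ω (f o) := Finset.sum_le_sum hf_wt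
    _ = ∑ c ∈ C, ∑ o ∈ O.filter (fun o => f o = c), ω (f o) :=
        (Finset.sum_fiberwise_of_maps_to hf_mem _).symm
    _ ≤ ∑ c ∈ C, 3 * ω c := by
        apply Finset.sum_le_sum
        intro c hc
        have : ∑ o ∈ O.filter (fun o => f o = c), ω (f o)
            = (O.filter (fun o => f o = c)).card * ω c := by
          rw [Finset.sum_congr rfl (fun o ho => by
            rw [(Finset.mem_filter.mp ho).2]), Finset.sum_const, nsmul_eq_mul]
        rw [this]
        have h3 := key c hc
        exact mul_le_mul_of_nonneg_right (by exact_mod_cast h3) (hω c)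
    _ = 3 * ∑ c ∈ C, ω c := (Finset.mul_sum _ _ _).symm
end

section
/- Let V be a finite type, let O be a finite family of pairwise disjoint nonempty finite subsets of V, let c be a finite subset of V with cardinality at most 3, and let ω be a real-valued weight function on finite subsets of V. If ω(o) ≤ ω(c) for every o ∈ O with o ∩ c ≠ ∅, and ω(c) ≥ 0, then ∑_{o ∈ O, o ∩ c ≠ ∅} ω(o) ≤ 3 · ω(c). -/
/-- If every optimal cycle intersecting `c` has weight at most `ω c`, `c` has
at most `3` vertices, and `ω c ≥ 0`, then the total weight of the optimal
cycles intersecting `c` is at most `3 * ω c`. -/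
theorem sum_inter_le_three_mul {V : Type*} [Fintype V] [DecidableEq V]
    (O : Finset (Finset V))
    (hO_disj : (O : Set (Finset V)).Pairwise (Function.onFun Disjoint id))
    (hO_ne : ∀ o ∈ O, o.Nonempty)
    (c : Finset V) (hc : c.card ≤ 3)
    (ω : Finset V → ℝ)
    (hωle : ∀ o ∈ O, (o ∩ c).Nonempty → ω o ≤ ω c)
    (hωc : 0 ≤ ω c) :
    ∑ o ∈ O.filter (fun o => (o ∩ c).Nonempty), ω o ≤ 3 * ω c := by
  set S := O.filter (fun o => (o ∩ c).Nonempty) with hS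
  have hcard : S.card ≤ 3 := by
    have h1 : S.card ≤ ∑ o ∈ S, (o ∩ c).card := by
      calc S.card = ∑ _o ∈ S, 1 := (Finset.card_eq_sum_ones S)
        _ ≤ _ := ?_
      apply Finset.sum_le_sum
      intro o ho
      have := (Finset.mem_filter.mp ho).2
      exact Finset.card_pos.mpr this
    have h2 : ∑ o ∈ S, (o ∩ c).card ≤ c.card := by
      rw [← Finset.card_biUnion]
      · apply Finset.card_le_card
        intro x hx
        simp only [Finset.mem_biUnion] at hx
        obtain ⟨o, _, hxo⟩ := hx
        exact (Finset.mem_inter.mp hxo).2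
      · intro a ha b hb hab
        have hd := hO_disj (Finset.mem_filter.mp ha).1 (Finset.mem_filter.mp hb).1 hab
        exact Finset.disjoint_of_subset_left Finset.inter_subset_left
          (Finset.disjoint_of_subset_right Finset.inter_subset_left hd)
    omega
  calc ∑ o ∈ S, ω o ≤ ∑ _o ∈ S, ω c := by
        apply Finset.sum_le_sum
        intro o ho
        exact hωle o (Finset.mem_filter.mp ho).1 (Finset.mem_filter.mp ho).2
    _ = S.card * ω c := by rw [Finset.sum_const, nsmul_eq_mul]
    _ ≤ 3 * ω c := by
        apply mul_le_mul_of_nonneg_right _ hωc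
        exact_mod_cast hcard
end

section
/- Let V be a finite type. Let O be a finite family of pairwise disjoint nonempty finite subsets of V, let C be a finite family of finite subsets of V each of cardinality at most 2, and let ω be a nonnegative real-valued weight function on finite subsets of V. Suppose there is a map f : O → C such that for every o ∈ O, the set f(o) intersects o and ω(o) ≤ ω(f(o)). Then ∑_{o ∈ O} ω(o) ≤ 2 · ∑_{c ∈ C} ω(c). In other words, for the special case of crossover exchanges (exchange cycles of size exactly 2), the greedy algorithm is a 1/2-approximation. -/
/-- For crossover exchanges (cycles of size at most 2), the greedy algorithm
is a 1/2-approximation. -/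
theorem greedy_half_approx {V : Type*} [Fintype V] [DecidableEq V]
    (O C : Finset (Finset V))
    (hO_disj : (O : Set (Finset V)).Pairwise (Function.onFun Disjoint id))
    (hO_ne : ∀ o ∈ O, o.Nonempty)
    (hC_card : ∀ c ∈ C, c.card ≤ 2)
    (ω : Finset V → ℝ) (hω : ∀ s : Finset V, 0 ≤ ω s)
    (f : Finset V → Finset V)
    (hf_mem : ∀ o ∈ O, f o ∈ C)
    (hf_inter : ∀ o ∈ O, (f o ∩ o).Nonempty)
    (hf_wt : ∀ o ∈ O, ω o ≤ ω (f o)) :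
    ∑ o ∈ O, ω o ≤ 2 * ∑ c ∈ C, ω c := by
  classical
  have key : ∀ c ∈ C, (O.filter (fun o => f o = c)).card ≤ 2 := by
    intro c hc
    set S := O.filter (fun o => f o = c) with hS
    rcases S.eq_empty_or_nonempty with h | h
    · simp [h]
    · obtain ⟨o₀, ho₀⟩ := h
      have ho₀O : o₀ ∈ O := (Finset.mem_filter.mp ho₀).1
      have : Nonempty V := ⟨(hO_ne o₀ ho₀O).choose⟩
      set g : Finset V → V := fun o =>
        if h : (c ∩ o).Nonempty then h.choose else Classical.arbitrary V with hg
      have hgmem : ∀ o ∈ S, g o ∈ c ∩ o := by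
        intro o ho
        have hoO : o ∈ O := (Finset.mem_filter.mp ho).1
        have hfo : f o = c := (Finset.mem_filter.mp ho).2
        have hne : (c ∩ o).Nonempty := hfo ▸ hf_inter o hoO
        simp only [hg, dif_pos hne]
        exact hne.choose_spec
      calc S.card ≤ c.card := by
            apply Finset.card_le_card_of_injOn g
            · intro o ho
              exact (Finset.mem_inter.mp (hgmem o ho)).1
            · intro o₁ h₁ o₂ h₂ heq
              by_contra hne
              have hd := hO_disj (Finset.mem_coe.mpr (Finset.mem_filter.mp h₁).1)
                (Finset.mem_coe.mpr (Finset.mem_filter.mp h₂).1) hne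
              have m1 : g o₁ ∈ o₁ := (Finset.mem_inter.mp (hgmem o₁ h₁)).2
              have m2 : g o₁ ∈ o₂ := heq ▸ (Finset.mem_inter.mp (hgmem o₂ h₂)).2
              exact Finset.disjoint_left.mp hd m1 m2
        _ ≤ 2 := hC_card c hc
  calc ∑ o ∈ O, ω o ≤ ∑ o ∈ O, ω (f o) := Finset.sum_le_sum hf_wt
    _ = ∑ c ∈ C, ∑ o ∈ O.filter (fun o => f o = c), ω (f o) :=
        (Finset.sum_fiberwise_of_maps_to hf_mem _).symm
    _ ≤ ∑ c ∈ C, 2 * ω c := by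
        apply Finset.sum_le_sum
        intro c hc
        have : ∑ o ∈ O.filter (fun o => f o = c), ω (f o)
            = (O.filter (fun o => f o = c)).card * ω c := by
          rw [Finset.sum_congr rfl (fun o ho => by
            rw [(Finset.mem_filter.mp ho).2]), Finset.sum_const, nsmul_eq_mul]
        rw [this]
        have := key c hc
        calc ((O.filter (fun o => f o = c)).card : ℝ) * ω c ≤ 2 * ω c := by
              apply mul_le_mul_of_nonneg_right _ (hω c)
              exact_mod_cast this
          _ = 2 * ω c := rfl
    _ = 2 * ∑ c ∈ C, ω c := (Finset.mul_sum _ _ _).symm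
end

section
/- Let V be a finite type and let k be a positive natural number. Let O be a finite family of pairwise disjoint nonempty finite subsets of V, let C be a finite family of finite subsets of V each of cardinality at most k, and let ω be a nonnegative real-valued weight function on finite subsets of V. Suppose there is a map f : O → C such that for every o ∈ O, the set f(o) intersects o and ω(o) ≤ ω(f(o)). Then ∑_{o ∈ O} ω(o) ≤ k · ∑_{c ∈ C} ω(c). In other words, the greedy algorithm for the kidney exchange problem with maximum cycle size k is a 1/k-approximation. -/
/-- The greedy algorithm for the kidney exchange problem with maximum cycle
size `k` is a 1/k-approximation. -/
theorem greedy_k_approx {V : Type*} [Fintype V] [DecidableEq V]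
    (k : ℕ) (hk : 0 < k)
    (O C : Finset (Finset V))
    (hO_disj : (O : Set (Finset V)).Pairwise (Function.onFun Disjoint id))
    (hO_ne : ∀ o ∈ O, o.Nonempty)
    (hC_card : ∀ c ∈ C, c.card ≤ k)
    (ω : Finset V → ℝ) (hω : ∀ s : Finset V, 0 ≤ ω s)
    (f : Finset V → Finset V)
    (hf_mem : ∀ o ∈ O, f o ∈ C)
    (hf_inter : ∀ o ∈ O, (f o ∩ o).Nonempty)
    (hf_wt : ∀ o ∈ O, ω o ≤ ω (f o)) :
    ∑ o ∈ O, ω o ≤ (k : ℝ) * ∑ c ∈ C, ω c := by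
  -- choose a witness point in f o ∩ o for each o
  have key : ∀ c ∈ C, (O.filter (fun o => f o = c)).card ≤ k := by
    intro c hc
    classical
    rcases (O.filter (fun o => f o = c)).eq_empty_or_nonempty with hE | hNE
    · simp [hE, hk.le]
    have : Nonempty V := by
      obtain ⟨o, ho⟩ := hNE
      exact ⟨(hO_ne o (Finset.mem_filter.mp ho).1).choose⟩
    set g : Finset V → V := fun o =>
      if h : (f o ∩ o).Nonempty then h.choose else Classical.arbitrary V
    have hg : ∀ o ∈ O, g o ∈ f o ∩ o := by
      intro o ho
      have h := hf_inter o ho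
      simpa [g, h] using h.choose_spec
    have : (O.filter (fun o => f o = c)).card ≤ c.card := by
      apply Finset.card_le_card_of_injOn g
      · intro o ho
        obtain ⟨hoO, hfo⟩ := Finset.mem_filter.mp ho
        have := hg o hoO
        rw [hfo] at this
        exact (Finset.mem_inter.mp this).1
      · intro o1 h1 o2 h2 heq
        obtain ⟨h1O, _⟩ := Finset.mem_filter.mp h1
        obtain ⟨h2O, _⟩ := Finset.mem_filter.mp h2
        by_contra hne
        have hd := hO_disj h1O h2O hne
        have m1 : g o1 ∈ o1 := (Finset.mem_inter.mp (hg o1 h1O)).2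
        have m2 : g o2 ∈ o2 := (Finset.mem_inter.mp (hg o2 h2O)).2
        rw [heq] at m1
        exact Finset.disjoint_left.mp hd m1 m2
    exact this.trans (hC_card c hc)
  calc ∑ o ∈ O, ω o ≤ ∑ o ∈ O, ω (f o) := Finset.sum_le_sum hf_wt
    _ = ∑ c ∈ C, ∑ o ∈ O.filter (fun o => f o = c), ω (f o) := by
        rw [Finset.sum_fiberwise_of_maps_to hf_mem]
    _ = ∑ c ∈ C, ∑ o ∈ O.filter (fun o => f o = c), ω c := by
        apply Finset.sum_congr rfl; intro c _
        apply Finset.sum_congr rfl; intro o ho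
        rw [(Finset.mem_filter.mp ho).2]
    _ = ∑ c ∈ C, ((O.filter (fun o => f o = c)).card : ℝ) * ω c := by
        simp [Finset.sum_const, nsmul_eq_mul]
    _ ≤ ∑ c ∈ C, (k : ℝ) * ω c := by
        apply Finset.sum_le_sum; intro c hc
        exact mul_le_mul_of_nonneg_right (by exact_mod_cast key c hc) (hω c)
    _ = (k : ℝ) * ∑ c ∈ C, ω c := by rw [Finset.mul_sum]
end
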